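/- Let F_q be a finite field of odd cardinality. For monic polynomials A, B ∈ F_q[x] of positive degree with gcd(A,B)=1, quadratic reciprocity holds: (B/A) = (−1)^{((q−1)/2)·deg A · deg B} · (A/B). -/

import Mathlib

open Polynomial UniqueFactorizationMonoid Finset

noncomputable section
open scoped Classical

variable (F : Type) [Field F] [Fintype F] [DecidableEq F]

/-- The Möbius function of `F_q[x]`. -/
def polyMu (A : F[X]) : ℤ :=
  if Squarefree A then (-1) ^ Multiset.card (normalizedFactors A) else 0

/-- The quadratic residue symbol `(f/P)` for a monic prime `P`. -/
def legSym (f P : F[X]) : ℤ :=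
  if P ∣ f then 0 else if ∃ g : F[X], P ∣ (g ^ 2 - f) then 1 else -1

/-- The Jacobi symbol `(f/Q)` for monic `Q`. -/
def jacSym (f Q : F[X]) : ℤ :=
  ((normalizedFactors Q).map (legSym F f)).prod

/-- `A_D(β) = Σ_{B monic, deg B = β} (D/B)`. -/
def charSum (D : F[X]) (β : ℕ) : ℤ :=
  ∑ᶠ B ∈ {B : F[X] | B.Monic ∧ B.natDegree = β}, jacSym F D B

/-- `σ(f,α) = Σ_{A monic, deg A = α, gcd(A,f)=1} μ(A)`. -/
def sigmaMu (f : F[X]) (α : ℕ) : ℤ :=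
  ∑ᶠ A ∈ {A : F[X] | A.Monic ∧ A.natDegree = α ∧ IsCoprime A f}, polyMu F A

/-- The von Mangoldt function of `F_q[x]`. -/
def polyLambda (f : F[X]) : ℕ :=
  if (normalizedFactors f).toFinset.card = 1 then
    (normalizedFactors f).toFinset.sum natDegree else 0

/-! ### Auxiliary lemmas for quadratic reciprocity -/

/-- Arithmetic helper: `(∑_{i<d} q^i) * ((q-1)/2) = q^d / 2` for odd `q > 1`. -/
lemma sum_geom_mul_half (q d : ℕ) (hq : Odd q) (h1 : 1 < q) :
    (∑ i ∈ Finset.range d, q ^ i) * ((q - 1) / 2) = q ^ d / 2 := by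
  obtain ⟨k, hk⟩ := (hq.pow : Odd (q ^ d))
  obtain ⟨j, hj⟩ := hq
  have hgeom : (∑ i ∈ Finset.range d, q ^ i) * (q - 1) = q ^ d - 1 := by
    have h1q : 1 ≤ q := le_of_lt h1
    have h1qd : 1 ≤ q ^ d := Nat.one_le_pow _ _ (by omega)
    zify [h1q, h1qd]
    push_cast
    exact geom_sum_mul _ _
  set a := ∑ i ∈ Finset.range d, q ^ i with ha
  have h5 : q - 1 = 2 * j := by omega
  have h6 : q ^ d - 1 = 2 * k := by omega
  rw [h5, h6] at hgeom
  have h2 : (q - 1) / 2 = j := by omega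
  have h3 : q ^ d / 2 = k := by omega
  rw [h2, h3]
  have h4 : 2 * (a * j) = 2 * k := by rw [← hgeom]; ring
  omega

lemma pm_mul {a b : ℤ} (ha : a = 1 ∨ a = -1) (hb : b = 1 ∨ b = -1) :
    a * b = 1 ∨ a * b = -1 := by
  rcases ha with rfl | rfl <;> rcases hb with rfl | rfl <;> simp

lemma pm_prod (m : Multiset ℤ) (h : ∀ x ∈ m, x = 1 ∨ x = -1) : m.prod = 1 ∨ m.prod = -1 := by
  induction m using Multiset.induction with
  | empty => left; simp
  | cons a s ih =>
      rw [Multiset.prod_cons]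
      exact pm_mul (h a (Multiset.mem_cons_self a s))
        (ih fun x hx => h x (Multiset.mem_cons_of_mem hx))

lemma pm_cast_inj {R : Type*} [CommRing R] (h2 : (2 : R) ≠ 0) {a b : ℤ}
    (ha : a = 1 ∨ a = -1) (hb : b = 1 ∨ b = -1) (h : (a : R) = b) : a = b := by
  rcases ha with rfl | rfl <;> rcases hb with rfl | rfl <;> push_cast at h
  · rfl
  · exact absurd (by linear_combination h) h2
  · exact absurd (by linear_combination -h) h2
  · rfl

lemma prod_map_pow_helper {α : Type*} (m : Multiset α) (c : ℤ) (f : α → ℕ) :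
    (m.map (fun x => c ^ f x)).prod = c ^ (m.map f).sum := by
  induction m using Multiset.induction with
  | empty => simp
  | cons a s ih => simp [Multiset.prod_cons, pow_add, ih, mul_comm]

lemma ringChar_ne_two (hq : Odd (Fintype.card F)) : ringChar F ≠ 2 := by
  intro h
  have h2 := FiniteField.even_card_iff_char_two.mp h
  have := Nat.odd_iff.mp hq
  omega

lemma two_ne_zero_alg (hq : Odd (Fintype.card F)) (R : Type*) [CommRing R] [Algebra F R]
    [Nontrivial R] : (2 : R) ≠ 0 := by
  haveI : CharP F (ringChar F) := ringChar.charP F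
  haveI : CharP R (ringChar F) :=
    charP_of_injective_algebraMap (algebraMap F R).injective _
  intro h
  have hd : (ringChar F) ∣ 2 := (CharP.cast_eq_zero_iff R (ringChar F) 2).mp (by exact_mod_cast h)
  have pp : (ringChar F).Prime := CharP.char_is_prime F _
  exact ringChar_ne_two F hq ((Nat.prime_dvd_prime_iff_eq pp Nat.prime_two).mp hd)

lemma monic_msprod {R : Type*} [CommSemiring R] {m : Multiset (Polynomial R)}
    (h : ∀ p ∈ m, p.Monic) : m.prod.Monic := by
  induction m using Multiset.induction with
  | empty => simpa using monic_one
  | cons a s ih =>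
      rw [Multiset.prod_cons]
      exact (h a (Multiset.mem_cons_self a s)).mul
        (ih fun p hp => h p (Multiset.mem_cons_of_mem hp))

lemma card_aroots' (P : F[X]) :
    Multiset.card (P.aroots (AlgebraicClosure F)) = P.natDegree := by
  rw [aroots_def, ← (IsAlgClosed.splits (P.map (algebraMap F (AlgebraicClosure F)))).natDegree_eq_card_roots,
    natDegree_map]

lemma aeval_eq_prod_aroots {B : F[X]} (hB : B.Monic) (α : AlgebraicClosure F) :
    aeval α B = ((B.aroots (AlgebraicClosure F)).map (fun β => α - β)).prod := by
  have hs : Splits (B.map (algebraMap F (AlgebraicClosure F))) :=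
    IsAlgClosed.splits _
  have hprod := hs.eq_prod_roots_of_monic (hB.map (algebraMap F (AlgebraicClosure F)))
  rw [aeval_def, ← eval_map, hprod, eval_multiset_prod, Multiset.map_map, aroots_def]
  apply congrArg
  apply Multiset.map_congr rfl
  intro β _
  simp

/-- The product of `Q(α)` over the roots `α` of `P` in the algebraic closure. -/
def rootProd (P Q : F[X]) : AlgebraicClosure F :=
  ((P.aroots (AlgebraicClosure F)).map (fun α => aeval α Q)).prod

lemma rootProd_swap (P Q : F[X]) (hP : P.Monic) (hQ : Q.Monic) :
    rootProd F P Q = (-1) ^ (P.natDegree * Q.natDegree) * rootProd F Q P := by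
  have hcP := card_aroots' F P
  have hcQ := card_aroots' F Q
  rw [rootProd, rootProd,
    Multiset.map_congr rfl (fun α _ => aeval_eq_prod_aroots F hQ α),
    Multiset.map_congr rfl (fun β _ => aeval_eq_prod_aroots F hP β)]
  have h1 : ∀ α : AlgebraicClosure F,
      ((Q.aroots (AlgebraicClosure F)).map (fun β => α - β)).prod
        = (-1) ^ Q.natDegree * ((Q.aroots (AlgebraicClosure F)).map (fun β => β - α)).prod := by
    intro α
    have hmm : (Q.aroots (AlgebraicClosure F)).map (fun β => α - β)
        = ((Q.aroots (AlgebraicClosure F)).map (fun β => β - α)).map Neg.neg := by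
      rw [Multiset.map_map]
      exact Multiset.map_congr rfl (fun β _ => by simp)
    rw [hmm, Multiset.prod_map_neg, Multiset.card_map, hcQ]
  rw [Multiset.map_congr rfl (fun α _ => h1 α), Multiset.prod_map_mul]
  have h2 : ((P.aroots (AlgebraicClosure F)).map
      (fun _ => (-1 : AlgebraicClosure F) ^ Q.natDegree)).prod
        = ((-1 : AlgebraicClosure F) ^ Q.natDegree) ^ P.natDegree := by
    rw [Multiset.map_const', Multiset.prod_replicate, hcP]
  rw [h2, ← pow_mul, Multiset.prod_map_prod_map]
  ring_nf

lemma legSym_zero {P f : F[X]} (h : P ∣ f) : legSym F f P = 0 := by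
  rw [legSym, if_pos h]

lemma legSym_pm {P f : F[X]} (hnd : ¬ P ∣ f) : legSym F f P = 1 ∨ legSym F f P = -1 := by
  rw [legSym, if_neg hnd]
  split_ifs <;> simp

lemma legSym_one {P : F[X]} (hPi : Irreducible P) : legSym F 1 P = 1 := by
  rw [legSym, if_neg (fun h => hPi.not_isUnit (isUnit_of_dvd_one h)),
    if_pos ⟨1, by norm_num⟩]

lemma card_adjoinRoot {P : F[X]} (hP0 : P ≠ 0) [Fintype (AdjoinRoot P)] :
    Fintype.card (AdjoinRoot P) = Fintype.card F ^ P.natDegree := by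
  rw [Module.card_fintype (AdjoinRoot.powerBasis hP0).basis, Fintype.card_fin,
    AdjoinRoot.powerBasis_dim]

lemma adjoinRoot_char_ne_two (hq : Odd (Fintype.card F)) {P : F[X]} (hPi : Irreducible P)
    [Fact (Irreducible P)] [Fintype (AdjoinRoot P)] : ringChar (AdjoinRoot P) ≠ 2 := by
  intro h
  have h2 := FiniteField.even_card_iff_char_two.mp h
  rw [card_adjoinRoot F hPi.ne_zero] at h2
  have := Nat.odd_iff.mp (hq.pow (n := P.natDegree))
  omega

lemma legSym_pow_eq (hq : Odd (Fintype.card F)) {P f : F[X]} (hPi : Irreducible P)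
    [Fact (Irreducible P)] [Fintype (AdjoinRoot P)] (hnd : ¬ P ∣ f) :
    (AdjoinRoot.mk P f) ^ (Fintype.card (AdjoinRoot P) / 2)
      = ((legSym F f P : ℤ) : AdjoinRoot P) := by
  have hchar : ringChar (AdjoinRoot P) ≠ 2 := adjoinRoot_char_ne_two F hq hPi
  have hz0 : AdjoinRoot.mk P f ≠ 0 := fun h => hnd (AdjoinRoot.mk_eq_zero.mp h)
  rw [legSym, if_neg hnd]
  split_ifs with hsq
  · obtain ⟨g, hg⟩ := hsq
    have hsqz : IsSquare (AdjoinRoot.mk P f) := by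
      refine ⟨AdjoinRoot.mk P g, ?_⟩
      have h0 : AdjoinRoot.mk P (g ^ 2 - f) = 0 := AdjoinRoot.mk_eq_zero.mpr hg
      rw [map_sub, map_pow, sub_eq_zero] at h0
      rw [← h0]; ring
    rw [(FiniteField.isSquare_iff hchar hz0).mp hsqz]
    norm_num
  · rcases FiniteField.pow_dichotomy hchar hz0 with h | h
    · exfalso
      obtain ⟨w, hw⟩ := (FiniteField.isSquare_iff hchar hz0).mpr h
      obtain ⟨g, rfl⟩ := AdjoinRoot.mk_surjective w
      exact hsq ⟨g, AdjoinRoot.mk_eq_zero.mp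
        (by rw [map_sub, map_pow, pow_two, ← hw, sub_self])⟩
    · rw [h]; norm_num

lemma legSym_mul (hq : Odd (Fintype.card F)) {P : F[X]} (hPi : Irreducible P) (f g : F[X]) :
    legSym F (f * g) P = legSym F f P * legSym F g P := by
  haveI := Fact.mk hPi
  haveI : Fintype (AdjoinRoot P) :=
    Module.fintypeOfFintype (AdjoinRoot.powerBasis hPi.ne_zero).basis
  have hp : Prime P := UniqueFactorizationMonoid.irreducible_iff_prime.mp hPi
  by_cases hf : P ∣ f
  · rw [legSym_zero F (hf.mul_right g), legSym_zero F hf, zero_mul]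
  by_cases hg : P ∣ g
  · rw [legSym_zero F (hg.mul_left f), legSym_zero F hg, mul_zero]
  have hfg : ¬ P ∣ f * g := fun h => ((hp.2.2 f g h).elim hf hg)
  have h2 : (2 : AdjoinRoot P) ≠ 0 := two_ne_zero_alg F hq _
  apply pm_cast_inj h2 (legSym_pm F hfg) (pm_mul (legSym_pm F hf) (legSym_pm F hg))
  push_cast
  rw [← legSym_pow_eq F hq hPi hf, ← legSym_pow_eq F hq hPi hg, ← legSym_pow_eq F hq hPi hfg,
    map_mul, mul_pow]

lemma legSym_multiset_prod (hq : Odd (Fintype.card F)) {P : F[X]} (hPi : Irreducible P)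
    (m : Multiset F[X]) :
    legSym F m.prod P = (m.map (fun f => legSym F f P)).prod := by
  induction m using Multiset.induction with
  | empty => simpa using legSym_one F hPi
  | cons a s ih =>
      rw [Multiset.prod_cons, legSym_mul F hq hPi, Multiset.map_cons, Multiset.prod_cons, ih]

/-- Euler-type evaluation: the `(q-1)/2`-th power of the root product equals the
Legendre symbol, viewed in the algebraic closure. -/
lemma rootProd_pow_half (hq : Odd (Fintype.card F)) {P Q : F[X]} (hPi : Irreducible P)
    (hPm : P.Monic) (hndvd : ¬ P ∣ Q) :
    rootProd F P Q ^ ((Fintype.card F - 1) / 2)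
      = ((legSym F Q P : ℤ) : AlgebraicClosure F) := by
  classical
  set p := ringChar F with hpdef
  haveI : CharP F p := ringChar.charP F
  obtain ⟨n, pp, hn⟩ := FiniteField.card F p
  haveI : Fact p.Prime := ⟨pp⟩
  haveI := Fact.mk hPi
  have hP0 : P ≠ 0 := hPm.ne_zero
  haveI : Fintype (AdjoinRoot P) := Module.fintypeOfFintype (AdjoinRoot.powerBasis hP0).basis
  have hd0 : 0 < P.natDegree := hPi.natDegree_pos
  have hcardL : Fintype.card (AdjoinRoot P) = Fintype.card F ^ P.natDegree :=
    card_adjoinRoot F hP0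
  have hq1 : 1 < Fintype.card F := Fintype.one_lt_card
  -- choose a root of P in the algebraic closure
  have hmem : ∃ x : AlgebraicClosure F, x ∈ P.aroots (AlgebraicClosure F) := by
    apply Multiset.card_pos_iff_exists_mem.mp
    rw [card_aroots' F P]; exact hd0
  obtain ⟨x, hx⟩ := hmem
  have hxroot : aeval x P = 0 := ((mem_aroots).mp hx).2
  set ι : AdjoinRoot P →ₐ[F] (AlgebraicClosure F) := AdjoinRoot.liftAlgHom P (Algebra.ofId F _) x hxroot with hιdef
  have hιx : ι (AdjoinRoot.root P) = x := by rw [hιdef]; exact AdjoinRoot.liftAlgHom_root P _ x hxroot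
  -- the q-power Frobenius of the algebraic closure
  haveI : CharP (AlgebraicClosure F) p :=
    charP_of_injective_algebraMap (algebraMap F (AlgebraicClosure F)).injective p
  set φ : AlgebraicClosure F →+* AlgebraicClosure F :=
    iterateFrobenius (AlgebraicClosure F) p n with hφdef0
  have hφdef : ∀ z, φ z = z ^ Fintype.card F := by
    intro z; rw [hφdef0, iterateFrobenius_def, ← hn]
  have hφalg : ∀ c : F, φ (algebraMap F (AlgebraicClosure F) c) = algebraMap F _ c := by
    intro c; rw [hφdef, ← map_pow, FiniteField.pow_card]
  have hφaeval : ∀ (z : AlgebraicClosure F) (h : F[X]), φ (aeval z h) = aeval (φ z) h := by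
    intro z h
    rw [aeval_def, aeval_def, hom_eval₂]
    congr 1
    exact RingHom.ext hφalg
  -- the roots of P are x^(q^i), i < deg P
  have hiroot : ∀ i, aeval (x ^ Fintype.card F ^ i) P = 0 := by
    intro i
    induction i with
    | zero => simpa using hxroot
    | succ i ih =>
        have hstep : x ^ Fintype.card F ^ (i + 1) = φ (x ^ Fintype.card F ^ i) := by
          rw [hφdef, ← pow_mul, ← pow_succ]
        rw [hstep, ← hφaeval, ih, map_zero]
  have hne_pow : ∀ i j, i < P.natDegree → j < P.natDegree →
      x ^ Fintype.card F ^ i = x ^ Fintype.card F ^ j → i = j := by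
    have main : ∀ i j, i < j → j < P.natDegree →
        x ^ Fintype.card F ^ i = x ^ Fintype.card F ^ j → False := by
      intro i j hij hjd heq
      set e := j - i with hedef
      have he0 : 0 < e := by omega
      have hed : e < P.natDegree := by omega
      have hqe : x ^ Fintype.card F ^ j = (x ^ Fintype.card F ^ e) ^ Fintype.card F ^ i := by
        rw [← pow_mul, ← pow_add]
        congr 2
        omega
      have hinj : Function.Injective
          (fun z : AlgebraicClosure F => z ^ Fintype.card F ^ i) := by
        have hform : (fun z : AlgebraicClosure F => z ^ Fintype.card F ^ i)
            = ⇑(iterateFrobenius (AlgebraicClosure F) p (n * i)) := by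
          funext z; rw [iterateFrobenius_def, hn, ← pow_mul]
        rw [hform]
        exact (iterateFrobenius (AlgebraicClosure F) p (n * i)).injective
      have hx_fix : x ^ Fintype.card F ^ e = x := by
        apply hinj
        simp only []
        rw [← hqe, ← heq]
      have hroot_fix : (AdjoinRoot.root P) ^ Fintype.card F ^ e = AdjoinRoot.root P := by
        apply RingHom.injective (ι : AdjoinRoot P →+* AlgebraicClosure F)
        rw [map_pow]
        show (ι (AdjoinRoot.root P)) ^ Fintype.card F ^ e = ι (AdjoinRoot.root P)
        rw [hιx, hx_fix]
      haveI : CharP (AdjoinRoot P) p :=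
        charP_of_injective_algebraMap (algebraMap F (AdjoinRoot P)).injective p
      have hall : ∀ z : AdjoinRoot P, z ^ Fintype.card F ^ e = z := by
        intro z
        obtain ⟨h, rfl⟩ := AdjoinRoot.mk_surjective z
        set φL := iterateFrobenius (AdjoinRoot P) p (n * e) with hφLdef0
        have hφLdef : ∀ w : AdjoinRoot P, φL w = w ^ Fintype.card F ^ e := by
          intro w; rw [hφLdef0, iterateFrobenius_def, hn, ← pow_mul]
        have hφLalg : ∀ c : F, φL (algebraMap F (AdjoinRoot P) c) = algebraMap F _ c := by
          intro c; rw [hφLdef, ← map_pow, FiniteField.pow_card_pow]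
        have hcomm : φL (aeval (AdjoinRoot.root P) h) = aeval (φL (AdjoinRoot.root P)) h := by
          rw [aeval_def, aeval_def, hom_eval₂]
          congr 1
          exact RingHom.ext hφLalg
        have h1 : AdjoinRoot.mk P h = aeval (AdjoinRoot.root P) h := (AdjoinRoot.aeval_eq h).symm
        rw [h1, ← hφLdef, hcomm, hφLdef, hroot_fix]
      obtain ⟨g, hg⟩ := IsCyclic.exists_generator (α := (AdjoinRoot P)ˣ)
      have horder : orderOf g = Fintype.card F ^ P.natDegree - 1 := by
        rw [orderOf_eq_card_of_forall_mem_zpowers hg, Nat.card_eq_fintype_card,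
          Fintype.card_units, hcardL]
      have hgp : g ^ Fintype.card F ^ e = g := by
        apply Units.ext
        rw [Units.val_pow_eq_pow_val]
        exact hall g
      have h1qe : 1 ≤ Fintype.card F ^ e := Nat.one_le_pow _ _ (by omega)
      have hg1 : g ^ (Fintype.card F ^ e - 1) = 1 := by
        have h2 : g ^ (Fintype.card F ^ e - 1) * g = g := by
          rw [← pow_succ, Nat.sub_add_cancel h1qe, hgp]
        exact mul_right_cancel (h2.trans (one_mul g).symm)
      have hdvd := orderOf_dvd_of_pow_eq_one hg1
      rw [horder] at hdvd
      have h1lt : 1 < Fintype.card F ^ e := by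
        calc 1 < Fintype.card F := hq1
        _ = Fintype.card F ^ 1 := (pow_one _).symm
        _ ≤ Fintype.card F ^ e := Nat.pow_le_pow_right (by omega) he0
      have hle : Fintype.card F ^ P.natDegree - 1 ≤ Fintype.card F ^ e - 1 :=
        Nat.le_of_dvd (by omega) hdvd
      have hlt : Fintype.card F ^ e < Fintype.card F ^ P.natDegree :=
        Nat.pow_lt_pow_right hq1 hed
      omega
    intro i j hi hj heq
    rcases lt_trichotomy i j with h | h | h
    · exact (main i j h hj heq).elim
    · exact h
    · exact (main j i h hi heq.symm).elim
  have hroots : P.aroots (AlgebraicClosure F)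
      = (Multiset.range P.natDegree).map (fun i => x ^ Fintype.card F ^ i) := by
    symm
    apply Multiset.eq_of_le_of_card_le
    · rw [Multiset.le_iff_subset]
      · intro z hz
        obtain ⟨i, _, rfl⟩ := Multiset.mem_map.mp hz
        exact (mem_aroots).mpr ⟨hP0, hiroot i⟩
      · exact (Multiset.nodup_range P.natDegree).map_on
          (fun i hi j hj hij =>
            hne_pow i j (Multiset.mem_range.mp hi) (Multiset.mem_range.mp hj) hij)
    · rw [card_aroots' F P, Multiset.card_map, Multiset.card_range]
  -- compute the root product
  set y := aeval x Q with hydef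
  have hy : ∀ i, aeval (x ^ Fintype.card F ^ i) Q = y ^ Fintype.card F ^ i := by
    intro i
    induction i with
    | zero => simp [hydef]
    | succ i ih =>
        have hstep : x ^ Fintype.card F ^ (i + 1) = φ (x ^ Fintype.card F ^ i) := by
          rw [hφdef, ← pow_mul, ← pow_succ]
        rw [hstep, ← hφaeval, ih, hφdef, ← pow_mul, ← pow_succ]
  have hrp : rootProd F P Q = y ^ (∑ i ∈ Finset.range P.natDegree, Fintype.card F ^ i) := by
    rw [rootProd, hroots, Multiset.map_map]
    have hmc : (Multiset.range P.natDegree).map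
          ((fun α => aeval α Q) ∘ fun i => x ^ Fintype.card F ^ i)
        = (Multiset.range P.natDegree).map (fun i => y ^ Fintype.card F ^ i) :=
      Multiset.map_congr rfl (fun i _ => hy i)
    rw [hmc, ← Finset.prod_pow_eq_pow_sum]
    rfl
  have hyz : y = ι (AdjoinRoot.mk P Q) := by
    rw [hydef]
    calc aeval x Q = aeval (ι (AdjoinRoot.root P)) Q := by rw [hιx]
      _ = ι (aeval (AdjoinRoot.root P) Q) := aeval_algHom_apply ι _ Q
      _ = ι (AdjoinRoot.mk P Q) := by rw [AdjoinRoot.aeval_eq]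
  rw [hrp, ← pow_mul, sum_geom_mul_half (Fintype.card F) P.natDegree hq hq1, hyz, ← map_pow,
    show Fintype.card F ^ P.natDegree / 2 = Fintype.card (AdjoinRoot P) / 2 by rw [hcardL],
    legSym_pow_eq F hq hPi hndvd, map_intCast]

/-- Quadratic reciprocity for distinct monic irreducible polynomials. -/
lemma legSym_reciprocity (hq : Odd (Fintype.card F)) {P Q : F[X]}
    (hPi : Irreducible P) (hPm : P.Monic) (hQi : Irreducible Q) (hQm : Q.Monic)
    (hne : P ≠ Q) :
    legSym F Q P * legSym F P Q
      = (-1) ^ (((Fintype.card F - 1) / 2) * P.natDegree * Q.natDegree) := by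
  have hPQ : ¬ P ∣ Q := fun h =>
    hne (eq_of_monic_of_associated hPm hQm (hPi.associated_of_dvd hQi h))
  have hQP : ¬ Q ∣ P := fun h =>
    hne (eq_of_monic_of_associated hQm hPm (hQi.associated_of_dvd hPi h)).symm
  have e1 := rootProd_pow_half F hq hPi hPm hPQ
  have e2 := rootProd_pow_half F hq hQi hQm hQP
  have hswap := rootProd_swap F P Q hPm hQm
  set E := (Fintype.card F - 1) / 2 with hE
  have h2K : (2 : AlgebraicClosure F) ≠ 0 := two_ne_zero_alg F hq _
  have hbpm : (-1 : ℤ) ^ (E * P.natDegree * Q.natDegree) * legSym F P Q = 1 ∨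
      (-1 : ℤ) ^ (E * P.natDegree * Q.natDegree) * legSym F P Q = -1 := by
    apply pm_mul _ (legSym_pm F hQP)
    rcases Nat.even_or_odd (E * P.natDegree * Q.natDegree) with h | h
    · left; exact h.neg_one_pow
    · right; exact h.neg_one_pow
  have key : ((legSym F Q P : ℤ) : AlgebraicClosure F)
      = (((-1 : ℤ) ^ (E * P.natDegree * Q.natDegree) * legSym F P Q : ℤ) :
          AlgebraicClosure F) := by
    push_cast
    rw [← e1, hswap, mul_pow, ← pow_mul, e2,
      show P.natDegree * Q.natDegree * E = E * P.natDegree * Q.natDegree by ring]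
  have := pm_cast_inj h2K (legSym_pm F hPQ) hbpm key
  rw [this]
  rcases legSym_pm F hQP with h | h <;> rw [h] <;> ring

/-- Quadratic reciprocity in F_q[x], q odd: for coprime monic A, B of positive degree,
(B/A) = (-1)^{((q-1)/2) deg A deg B} (A/B). -/
theorem statement6 (hq : Odd (Fintype.card F)) (A B : F[X])
    (hA : A.Monic) (hB : B.Monic) (hdA : 0 < A.natDegree) (hdB : 0 < B.natDegree)
    (hcop : IsCoprime A B) :
    jacSym F B A =
      (-1) ^ (((Fintype.card F - 1) / 2) * A.natDegree * B.natDegree) * jacSym F A B := by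
  classical
  have hA0 : A ≠ 0 := hA.ne_zero
  have hB0 : B ≠ 0 := hB.ne_zero
  set NA := normalizedFactors A with hNA
  set NB := normalizedFactors B with hNB
  have hmonA : ∀ P ∈ NA, (P : F[X]).Monic := by
    intro P hP
    have h1 := normalize_normalized_factor P hP
    have h0 : P ≠ 0 := (prime_of_normalized_factor P hP).ne_zero
    rw [← h1]; exact monic_normalize h0
  have hmonB : ∀ Q ∈ NB, (Q : F[X]).Monic := by
    intro Q hQ
    have h1 := normalize_normalized_factor Q hQ
    have h0 : Q ≠ 0 := (prime_of_normalized_factor Q hQ).ne_zero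
    rw [← h1]; exact monic_normalize h0
  have hirrA : ∀ P ∈ NA, Irreducible P := fun P hP =>
    (prime_of_normalized_factor P hP).irreducible
  have hirrB : ∀ Q ∈ NB, Irreducible Q := fun Q hQ =>
    (prime_of_normalized_factor Q hQ).irreducible
  have hzA : (0 : F[X]) ∉ NA := fun h => (prime_of_normalized_factor 0 h).ne_zero rfl
  have hzB : (0 : F[X]) ∉ NB := fun h => (prime_of_normalized_factor 0 h).ne_zero rfl
  have hAprod : NA.prod = A :=
    eq_of_monic_of_associated (monic_msprod hmonA) hA
      (prod_normalizedFactors hA0)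
  have hBprod : NB.prod = B :=
    eq_of_monic_of_associated (monic_msprod hmonB) hB
      (prod_normalizedFactors hB0)
  have hPneQ : ∀ P ∈ NA, ∀ Q ∈ NB, P ≠ Q := by
    intro P hP Q hQ h
    exact (hirrA P hP).not_isUnit (hcop.isUnit_of_dvd' (dvd_of_mem_normalizedFactors hP)
      (h ▸ dvd_of_mem_normalizedFactors hQ))
  have hQndvdA : ∀ Q ∈ NB, ¬ Q ∣ A := by
    intro Q hQ h
    exact (hirrB Q hQ).not_isUnit (hcop.isUnit_of_dvd' h (dvd_of_mem_normalizedFactors hQ))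
  have hdegA : (NA.map natDegree).sum = A.natDegree := by
    conv_rhs => rw [← hAprod]
    rw [natDegree_multiset_prod NA hzA]
  have hdegB : (NB.map natDegree).sum = B.natDegree := by
    conv_rhs => rw [← hBprod]
    rw [natDegree_multiset_prod NB hzB]
  set E := (Fintype.card F - 1) / 2 with hE
  have h1 : jacSym F B A
      = (NA.map (fun P => (NB.map (fun Q => legSym F Q P)).prod)).prod := by
    rw [jacSym, ← hNA]
    apply congrArg
    apply Multiset.map_congr rfl
    intro P hP
    rw [show legSym F B P = legSym F NB.prod P by rw [hBprod],
      legSym_multiset_prod F hq (hirrA P hP)]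
  have h2 : jacSym F A B
      = (NA.map (fun P => (NB.map (fun Q => legSym F P Q)).prod)).prod := by
    rw [jacSym, ← hNB]
    rw [Multiset.map_congr rfl (fun Q hQ => by
      rw [show legSym F A Q = legSym F NA.prod Q by rw [hAprod],
        legSym_multiset_prod F hq (hirrB Q hQ)])]
    exact (Multiset.prod_map_prod_map NA NB).symm
  have hmul : jacSym F B A * jacSym F A B
      = (-1 : ℤ) ^ (E * A.natDegree * B.natDegree) := by
    have hinner : ∀ P ∈ NA,
        (NB.map (fun Q => legSym F Q P)).prod * (NB.map (fun Q => legSym F P Q)).prod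
          = (-1 : ℤ) ^ (E * P.natDegree * B.natDegree) := by
      intro P hP
      rw [← Multiset.prod_map_mul,
        Multiset.map_congr rfl (fun Q hQ =>
          legSym_reciprocity F hq (hirrA P hP) (hmonA P hP) (hirrB Q hQ) (hmonB Q hQ)
            (hPneQ P hP Q hQ)),
        prod_map_pow_helper NB (-1) (fun Q => E * P.natDegree * Q.natDegree),
        Multiset.sum_map_mul_left, hdegB]
    have houter : (NA.map (fun P => (-1 : ℤ) ^ (E * P.natDegree * B.natDegree))).prod
        = (-1 : ℤ) ^ (E * A.natDegree * B.natDegree) := by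
      rw [Multiset.map_congr rfl (fun P _ =>
        show (-1 : ℤ) ^ (E * P.natDegree * B.natDegree)
          = (-1 : ℤ) ^ (E * B.natDegree * P.natDegree) from by
            rw [show E * P.natDegree * B.natDegree = E * B.natDegree * P.natDegree from by ring]),
        prod_map_pow_helper NA (-1) (fun P => E * B.natDegree * P.natDegree),
        Multiset.sum_map_mul_left, hdegA]
      congr 1
      ring
    rw [h1, h2, ← Multiset.prod_map_mul, Multiset.map_congr rfl hinner, houter]
  have hjac_pm : jacSym F A B = 1 ∨ jacSym F A B = -1 := by
    rw [jacSym, ← hNB]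
    apply pm_prod
    intro x hx
    obtain ⟨Q, hQ, rfl⟩ := Multiset.mem_map.mp hx
    exact legSym_pm F (hQndvdA Q hQ)
  have hsq : jacSym F A B * jacSym F A B = 1 := by
    rcases hjac_pm with h | h <;> rw [h] <;> norm_num
  calc jacSym F B A = jacSym F B A * (jacSym F A B * jacSym F A B) := by rw [hsq, mul_one]
    _ = (jacSym F B A * jacSym F A B) * jacSym F A B := by ring
    _ = (-1) ^ (E * A.natDegree * B.natDegree) * jacSym F A B := by rw [hmul]
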